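/- Let f : [0,∞) → ℝ be real analytic on [0,∞) and let γ ∈ ℝ. If f(q·r) = q·f(r) + r·f(q) + γ·f(q)·f(r) holds for all rational numbers q, r ∈ [0,1], then f(x·y) = x·f(y) + y·f(x) + γ·f(x)·f(y) holds for all real x, y ∈ [0,∞). -/

import Mathlib

open Filter Set Topology

theorem stmt4 (f : ℝ → ℝ) (hf : ∀ x ∈ Set.Ici (0 : ℝ), AnalyticAt ℝ f x) (γ : ℝ)
    (h : ∀ q r : ℚ, 0 ≤ q → q ≤ 1 → 0 ≤ r → r ≤ 1 →
      f ((q : ℝ) * (r : ℝ)) =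
        (q : ℝ) * f (r : ℝ) + (r : ℝ) * f (q : ℝ) + γ * f (q : ℝ) * f (r : ℝ)) :
    ∀ x y : ℝ, 0 ≤ x → 0 ≤ y →
      f (x * y) = x * f y + y * f x + γ * f x * f y := by
  -- A frequently-zero criterion at 1/2 from vanishing at rationals in (0,1]
  have hfreq : ∀ g : ℝ → ℝ, (∀ q : ℚ, 0 < q → q ≤ 1 → g q = 0) →
      ∃ᶠ z in 𝓝[≠] ((1:ℝ)/2), g z = 0 := by
    intro g hg
    have htend0 : Tendsto (fun n : ℕ => ((1/2 + 1/(n+4) : ℚ) : ℝ)) atTop (𝓝 ((1:ℝ)/2)) := by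
      have h1 : Tendsto (fun n : ℕ => (1 : ℝ)/(n+4)) atTop (𝓝 0) := by
        simp only [one_div]
        apply Tendsto.comp tendsto_inv_atTop_zero
        simpa using (tendsto_natCast_atTop_atTop (R := ℝ)).atTop_add
          (tendsto_const_nhds (x := (4:ℝ)))
      have h2 : Tendsto (fun n : ℕ => (1:ℝ)/2 + 1/(n+4)) atTop (𝓝 ((1:ℝ)/2 + 0)) :=
        tendsto_const_nhds.add h1
      rw [add_zero] at h2
      exact h2.congr (fun n => by push_cast; ring)
    have htend : Tendsto (fun n : ℕ => ((1/2 + 1/(n+4) : ℚ) : ℝ)) atTop (𝓝[≠] ((1:ℝ)/2)) := by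
      apply tendsto_nhdsWithin_of_tendsto_nhds_of_eventually_within _ htend0
      apply Filter.Eventually.of_forall
      intro n
      have hpos : (0:ℝ) < 1/((n:ℝ)+4) := by positivity
      simp only [mem_compl_iff, mem_singleton_iff]
      push_cast
      intro hcon
      nlinarith
    apply htend.frequently
    apply Filter.Frequently.of_forall
    intro n
    have hb1 : (0:ℚ) < 1/2 + 1/(n+4) := by positivity
    have hb2 : (1/2 + 1/(n+4) : ℚ) ≤ 1 := by
      have h4 : (4:ℚ) ≤ (n:ℚ) + 4 := le_add_of_nonneg_left (Nat.cast_nonneg n)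
      have : (1:ℚ)/((n:ℚ)+4) ≤ 1/4 := by
        apply one_div_le_one_div_of_le <;> norm_num
      linarith
    exact hg (1/2 + 1/(n+4)) hb1 hb2
  have half_mem : (1:ℝ)/2 ∈ Set.Ioi (0:ℝ) := by norm_num
  -- Step A: extend to real y > 0 for rational q
  have hA : ∀ q : ℚ, 0 ≤ q → q ≤ 1 → ∀ y : ℝ, 0 < y →
      f (q * y) = q * f y + y * f q + γ * f q * f y := by
    intro q hq0 hq1 y hy
    set g : ℝ → ℝ := fun y => f (q * y) - (q * f y + y * f q + γ * f q * f y) with hg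
    have hganal : AnalyticOnNhd ℝ g (Set.Ioi 0) := by
      intro z hz
      have hmul : AnalyticAt ℝ (fun z : ℝ => (q:ℝ) * z) z := analyticAt_const.mul analyticAt_id
      have h1 : AnalyticAt ℝ (fun z : ℝ => f ((q:ℝ) * z)) z :=
        AnalyticAt.comp (g := f) (f := fun z : ℝ => (q:ℝ) * z)
          (hf ((q:ℝ) * z) (Set.mem_Ici.mpr (mul_nonneg (by exact_mod_cast hq0) (le_of_lt hz)))) hmul
      have h2 : AnalyticAt ℝ f z := hf z (Set.mem_Ici.mpr (le_of_lt hz))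
      apply h1.sub
      apply AnalyticAt.add
      apply AnalyticAt.add
      · exact analyticAt_const.mul h2
      · exact analyticAt_id.mul analyticAt_const
      · exact analyticAt_const.mul h2
    have hzero : Set.EqOn g 0 (Set.Ioi 0) := by
      apply hganal.eqOn_zero_of_preconnected_of_frequently_eq_zero isPreconnected_Ioi half_mem
      apply hfreq
      intro r hr0 hr1
      simp only [hg]
      have := h q r hq0 hq1 (le_of_lt hr0) hr1
      linarith
    have := hzero hy
    simp only [hg, Pi.zero_apply] at this
    linarith
  -- Step B: extend to real x > 0
  have hB : ∀ x y : ℝ, 0 < x → 0 < y →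
      f (x * y) = x * f y + y * f x + γ * f x * f y := by
    intro x y hx hy
    set g : ℝ → ℝ := fun x => f (x * y) - (x * f y + y * f x + γ * f x * f y) with hg
    have hganal : AnalyticOnNhd ℝ g (Set.Ioi 0) := by
      intro z hz
      have hmul : AnalyticAt ℝ (fun z : ℝ => z * y) z := analyticAt_id.mul analyticAt_const
      have h1 : AnalyticAt ℝ (fun z : ℝ => f (z * y)) z :=
        AnalyticAt.comp (g := f) (f := fun z : ℝ => z * y)
          (hf (z * y) (mul_nonneg (le_of_lt hz) (le_of_lt hy))) hmul
      have h2 : AnalyticAt ℝ f z := hf z (Set.mem_Ici.mpr (le_of_lt hz))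
      apply h1.sub
      apply AnalyticAt.add
      apply AnalyticAt.add
      · exact analyticAt_id.mul analyticAt_const
      · exact analyticAt_const.mul h2
      · exact (analyticAt_const.mul h2).mul analyticAt_const
    have hzero : Set.EqOn g 0 (Set.Ioi 0) := by
      apply hganal.eqOn_zero_of_preconnected_of_frequently_eq_zero isPreconnected_Ioi half_mem
      apply hfreq
      intro r hr0 hr1
      simp only [hg]
      have := hA r (le_of_lt hr0) hr1 y hy
      linarith
    have := hzero hx
    simp only [hg, Pi.zero_apply] at this
    linarith
  -- Step C: boundary identity
  have hC : ∀ t : ℝ, 0 ≤ t → f 0 = t * f 0 + γ * f 0 * f t := by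
    intro t ht
    rcases ht.eq_or_lt with h0 | h0
    · subst h0
      have := h 0 0 le_rfl (by norm_num) le_rfl (by norm_num)
      push_cast at this
      simp only [mul_zero, zero_mul, zero_add] at this
      linarith
    · set g : ℝ → ℝ := fun x => f (x * t) - (x * f t + t * f x + γ * f x * f t) with hg
      have hcont : ContinuousAt g 0 := by
        have fc0 : ContinuousAt f (0:ℝ) := (hf 0 Set.self_mem_Ici).continuousAt
        have fc1 : ContinuousAt f ((0:ℝ) * t) := by simpa using fc0
        simp only [hg]
        fun_prop
      have h1 : Tendsto g (𝓝[Set.Ioi 0] 0) (𝓝 (g 0)) := hcont.continuousWithinAt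
      have h2 : Tendsto g (𝓝[Set.Ioi 0] 0) (𝓝 0) := by
        apply Tendsto.congr' _ tendsto_const_nhds
        filter_upwards [self_mem_nhdsWithin] with x hx
        have := hB x t hx h0
        simp only [hg]
        linarith
      have hg0 : g 0 = 0 := tendsto_nhds_unique h1 h2
      simp only [hg, zero_mul, zero_add] at hg0
      linarith
  -- conclude
  intro x y hx hy
  rcases hx.eq_or_lt with h0 | h0
  · subst h0
    rw [zero_mul]
    linear_combination hC y hy
  · rcases hy.eq_or_lt with h1 | h1
    · subst h1
      rw [mul_zero]
      linear_combination hC x hx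
    · exact hB x y h0 h1
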